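/- A q-cycle σ ∈ 𝒞_q has a realization (f, 𝒪) by a covering map f: ℝ/ℤ → ℝ/ℤ of degree k if and only if k ≥ des(σ). In particular, the minimal degree of a covering map of the circle admitting a period q orbit realizing σ equals des(σ). -/

import Mathlib

open scoped Classical

noncomputable section

/-- The representative of `i : ZMod q` in `{1, …, q}`. -/
def rep (q : ℕ) [NeZero q] (i : ZMod q) : ℕ :=
  if i = 0 then q else i.val

/-- The rotation `ρ : i ↦ i + 1 (mod q)` of `ZMod q`. -/
def rotPerm (q : ℕ) : Equiv.Perm (ZMod q) :=
  Equiv.addRight 1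

/-- The descent number `des σ`: the number of `i ∈ ZMod q` with `σ(i) > σ(i+1)`,
values compared via their representatives in `{1, …, q}`. -/
def desNum (q : ℕ) [NeZero q] (σ : Equiv.Perm (ZMod q)) : ℕ :=
  (Finset.univ.filter fun i : ZMod q => rep q (σ (i + 1)) < rep q (σ i)).card

/-- `σ` is a `q`-cycle, i.e. it acts transitively on `ZMod q`. -/
def IsQCycle (q : ℕ) (σ : Equiv.Perm (ZMod q)) : Prop :=
  ∀ i j : ZMod q, ∃ n : ℕ, (σ ^ n) i = j

/-- The transition matrix of `σ`: the `(i,j)` entry is `1` if `j` lies in the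
cyclic interval `[σ(i), σ(i+1))` of `ZMod q` and `0` otherwise. -/
def transMatrix (q : ℕ) [NeZero q] (σ : Equiv.Perm (ZMod q)) :
    Matrix (ZMod q) (ZMod q) ℝ :=
  Matrix.of fun i j => if (j - σ i).val < (σ (i + 1) - σ i).val then (1 : ℝ) else 0

/-- A probability vector: non-negative components summing to `1`. -/
def IsProbVec (q : ℕ) [NeZero q] (v : ZMod q → ℝ) : Prop :=
  (∀ i, 0 ≤ v i) ∧ ∑ i, v i = 1

/-- The symmetry order of `σ`: the order of the stabilizer of `σ` in the rotation
group `⟨ρ⟩` acting by conjugation. -/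
def symOrder (q : ℕ) [NeZero q] (σ : Equiv.Perm (ZMod q)) : ℕ :=
  ((Finset.range q).filter fun j => rotPerm q ^ j * σ * (rotPerm q ^ j)⁻¹ = σ).card

/-- `F : ℝ → ℝ` is a lift of a degree `k` covering map of `ℝ/ℤ`:
a homeomorphism of `ℝ` with `F (t+1) = F t + k`. -/
def IsDegreeLift (k : ℕ) (F : ℝ → ℝ) : Prop :=
  Continuous F ∧ StrictMono F ∧ ∀ t, F (t + 1) = F t + k

/-- The fixed point of the circle map corresponding to `u` (a point with
`F u - u ∈ ℤ`) is topologically repelling: `t ↦ F t - t` is strictly increasing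
in a neighborhood of `u`. -/
def TopRepelling (F : ℝ → ℝ) (u : ℝ) : Prop :=
  ∃ ε > 0, StrictMonoOn (fun t => F t - t) (Set.Ioo (u - ε) (u + ε))

/-- `x : ZMod q → ℝ` is a period `q` orbit realizing `σ` for the circle map with
lift `F`: the points `x i` lie in `(0,1)` and are increasing with respect to the
representatives `{1, …, q}` (so that `0, x₁, …, x_q` are in positive cyclic
order), and on the circle `f(x i) = x (σ i)` for all `i`. -/
def IsRealization (q : ℕ) [NeZero q] (σ : Equiv.Perm (ZMod q))
    (F : ℝ → ℝ) (x : ZMod q → ℝ) : Prop :=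
  (∀ i, x i ∈ Set.Ioo (0 : ℝ) 1) ∧
  (∀ i j : ZMod q, rep q i < rep q j → x i < x j) ∧
  (∀ i, ∃ m : ℤ, F (x i) = x (σ i) + m)

/-- A realization of `σ` under the multiplication map `m_k : x ↦ kx (mod ℤ)`. -/
def MkRealization (q k : ℕ) [NeZero q] (σ : Equiv.Perm (ZMod q)) (x : ZMod q → ℝ) : Prop :=
  IsRealization q σ (fun t => (k : ℝ) * t) x

/-- The upper endpoint (as a real number) of the partition interval
`I i = [x i, x (i+1)]`; for `i = 0 ≡ q` the interval wraps around `0 ∈ ℝ/ℤ`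
and the endpoint is `x 1 + 1`. -/
def upperPt (q : ℕ) [NeZero q] (x : ZMod q → ℝ) (i : ZMod q) : ℝ :=
  if i = 0 then x 1 + 1 else x (i + 1)

/-- The `i`-th component of the fixed point distribution: the number of fixed
points of `m_k` (the points `j/(k-1) (mod ℤ)`) in the interior of the partition
interval `I i`. -/
def fixDist (q k : ℕ) [NeZero q] (x : ZMod q → ℝ) (i : ZMod q) : ℕ :=
  ((Finset.Icc 1 (2 * (k - 1))).filter fun j : ℕ =>
    x i < (j : ℝ) / ((k : ℝ) - 1) ∧ (j : ℝ) / ((k : ℝ) - 1) < upperPt q x i).card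

/-- The number of fixed points of `m_k` in the interval `(0, x 1)`. -/
def countFixBelow (q k : ℕ) [NeZero q] (x : ZMod q → ℝ) : ℕ :=
  ((Finset.range (k - 1)).filter fun j : ℕ =>
    0 < j ∧ (j : ℝ) / ((k : ℝ) - 1) < x 1).card

/-- The `m`-th component of the (cumulative) deployment vector: the number of
orbit points in `(0, m/(k-1))`. -/
def depCount (q k : ℕ) [NeZero q] (x : ZMod q → ℝ) (m : ℕ) : ℕ :=
  (Finset.univ.filter fun j : ZMod q => x j < (m : ℝ) / ((k : ℝ) - 1)).card

/-- The rank of a marked index `i` among the marked indices `i₁ < ⋯ < i_{d-1}`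
(ordered by their representatives in `{1, …, q}`). -/
def markRank (q : ℕ) [NeZero q] (σ : Equiv.Perm (ZMod q)) (i : ZMod q) : ℕ :=
  (Finset.univ.filter fun i' : ZMod q =>
    transMatrix q σ i' i' = 1 ∧ rep q i' ≤ rep q i).card

namespace CircleAux

variable {q k : ℕ} [NeZero q]

lemma rep_pos (i : ZMod q) : 1 ≤ rep q i := by
  unfold rep
  split
  · exact Nat.one_le_iff_ne_zero.2 (NeZero.ne q)
  · rename_i h
    exact Nat.one_le_iff_ne_zero.2 (fun h0 => h ((ZMod.val_eq_zero i).1 h0))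

lemma rep_le (i : ZMod q) : rep q i ≤ q := by
  unfold rep; split
  · exact le_rfl
  · exact (ZMod.val_lt i).le

lemma rep_lt_q (i : ZMod q) (h : i ≠ 0) : rep q i < q := by
  unfold rep; rw [if_neg h]; exact ZMod.val_lt i

lemma rep_inj : Function.Injective (rep q) := by
  intro i j hij
  unfold rep at hij
  by_cases hi : i = 0 <;> by_cases hj : j = 0 <;> simp [hi, hj] at hij ⊢
  · exact absurd ((ZMod.val_lt j)) (by omega)
  · exact absurd ((ZMod.val_lt i)) (by omega)
  · exact ZMod.val_injective q hij

lemma cast_rep (i : ZMod q) : ((rep q i : ℕ) : ZMod q) = i := by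
  unfold rep; split
  · rename_i h; rw [h, ZMod.natCast_self]
  · rw [ZMod.natCast_val, ZMod.cast_id]

lemma rep_add_one (hq : 2 ≤ q) (i : ZMod q) (h : i ≠ 0) :
    rep q (i + 1) = rep q i + 1 := by
  haveI : Fact (1 < q) := ⟨hq⟩
  have hval : (i + 1).val = (i.val + 1) % q := by
    rw [ZMod.val_add, ZMod.val_one]
  have hlt : i.val < q := ZMod.val_lt i
  by_cases h1 : i + 1 = 0
  · have e1 : (i.val + 1) % q = 0 := by rw [← hval, ZMod.val_eq_zero]; exact h1
    have e2 : i.val + 1 = q :=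
      le_antisymm hlt (Nat.le_of_dvd (Nat.succ_pos _) (Nat.dvd_of_mod_eq_zero e1))
    unfold rep; rw [if_pos h1, if_neg h]; omega
  · have h0 : (i+1).val ≠ 0 := fun hh => h1 ((ZMod.val_eq_zero _).1 hh)
    rw [hval] at h0
    have hne : i.val + 1 ≠ q := fun hh => h0 (by rw [hh, Nat.mod_self])
    unfold rep; rw [if_neg h1, if_neg h, hval, Nat.mod_eq_of_lt (by omega)]

lemma rep_lt_rep_add_one (hq : 2 ≤ q) (i : ZMod q) (h : i ≠ 0) :
    rep q i < rep q (i + 1) := by rw [rep_add_one hq i h]; omega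

lemma rep_zero : rep q (0 : ZMod q) = q := by unfold rep; rw [if_pos rfl]

lemma one_ne_zero' (hq : 2 ≤ q) : (1 : ZMod q) ≠ 0 := by
  haveI : Fact (1 < q) := ⟨hq⟩
  exact one_ne_zero

lemma rep_one (hq : 2 ≤ q) : rep q (1 : ZMod q) = 1 := by
  haveI : Fact (1 < q) := ⟨hq⟩
  unfold rep; rw [if_neg (one_ne_zero' hq), ZMod.val_one]

lemma one_le_desNum (hq : 2 ≤ q) (σ : Equiv.Perm (ZMod q)) : 1 ≤ desNum q σ := by
  have h1 : (1 : ZMod q) ≠ 0 := one_ne_zero' hq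
  have hσi : σ (σ⁻¹ 0) = 0 := by simp
  have hne : σ (σ⁻¹ 0 + 1) ≠ 0 := by
    intro h
    have : σ⁻¹ 0 + 1 = σ⁻¹ 0 := σ.injective (by rw [h, hσi])
    exact h1 (add_eq_left.mp this)
  have hdes : rep q (σ (σ⁻¹ 0 + 1)) < rep q (σ (σ⁻¹ 0)) := by
    rw [hσi, rep_zero]
    exact rep_lt_q _ hne
  refine Finset.card_pos.2 ⟨σ⁻¹ 0, Finset.mem_filter.2 ⟨Finset.mem_univ _, hdes⟩⟩

lemma forward {k : ℕ} (hq : 2 ≤ q) (σ : Equiv.Perm (ZMod q)) (F : ℝ → ℝ)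
    (x : ZMod q → ℝ) (hF : IsDegreeLift k F) (hx : IsRealization q σ F x) :
    desNum q σ ≤ k := by
  obtain ⟨hcont, hmono, hper⟩ := hF
  obtain ⟨hIoo, hord, hmap⟩ := hx
  choose m hm using hmap
  have key : ∀ i : ZMod q,
      (if rep q (σ (i+1)) < rep q (σ i) then (1:ℤ) else 0)
        ≤ m (i+1) - m i + (if i = 0 then (k:ℤ) else 0) := by
    intro i
    have hb : ∀ j, 0 < x j ∧ x j < 1 := fun j => ⟨(hIoo j).1, (hIoo j).2⟩
    by_cases hi : i = 0
    · subst hi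
      have h01 : x 0 < x 1 + 1 := by linarith [(hb 0).2, (hb 1).1]
      have hFlt : F (x 0) < F (x 1) + k := by
        have := hmono h01
        rwa [hper (x 1)] at this
      rw [hm 0, hm 1] at hFlt
      rw [if_pos rfl]
      have hreal : x (σ 0) + m 0 < x (σ (0+1)) + m (0+1) + k := by
        simpa [zero_add] using hFlt
      split
      · rename_i hdes
        have hxlt : x (σ (0+1)) < x (σ 0) := hord _ _ hdes
        have : (0:ℝ) < ((m (0+1) - m 0 + k : ℤ) : ℝ) := by push_cast; linarith
        have : (0:ℤ) < m (0+1) - m 0 + k := by exact_mod_cast this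
        omega
      · have : (-1:ℝ) < ((m (0+1) - m 0 + k : ℤ) : ℝ) := by
          push_cast; linarith [(hb (σ 0)).1, (hb (σ (0+1))).2]
        have : (-1:ℤ) < m (0+1) - m 0 + k := by exact_mod_cast this
        omega
    · have hxi : x i < x (i+1) := hord _ _ (rep_lt_rep_add_one hq i hi)
      have hFlt : F (x i) < F (x (i+1)) := hmono hxi
      rw [hm i, hm (i+1)] at hFlt
      rw [if_neg hi, add_zero]
      split
      · rename_i hdes
        have hxlt : x (σ (i+1)) < x (σ i) := hord _ _ hdes
        have : (0:ℝ) < ((m (i+1) - m i : ℤ) : ℝ) := by push_cast; linarith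
        have : (0:ℤ) < m (i+1) - m i := by exact_mod_cast this
        omega
      · have : (-1:ℝ) < ((m (i+1) - m i : ℤ) : ℝ) := by
          push_cast; linarith [(hb (σ i)).1, (hb (σ (i+1))).2]
        have : (-1:ℤ) < m (i+1) - m i := by exact_mod_cast this
        omega
  have sum1 : ∑ i : ZMod q, (m (i+1) - m i + (if i = 0 then (k:ℤ) else 0)) = k := by
    rw [Finset.sum_add_distrib, Finset.sum_sub_distrib]
    have h2 : ∑ i : ZMod q, m (i+1) = ∑ i : ZMod q, m i :=
      Fintype.sum_equiv (Equiv.addRight 1) _ _ (fun i => rfl)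
    rw [h2, sub_self, zero_add,
      Finset.sum_ite_eq' Finset.univ (0 : ZMod q) (fun _ => (k:ℤ)),
      if_pos (Finset.mem_univ _)]
  have hcast : (desNum q σ : ℤ) =
      ∑ i : ZMod q, (if rep q (σ (i+1)) < rep q (σ i) then (1:ℤ) else 0) := by
    rw [desNum, Finset.card_filter]
    push_cast
    rfl
  have : (desNum q σ : ℤ) ≤ (k : ℤ) := by
    rw [hcast, ← sum1]
    exact Finset.sum_le_sum (fun i _ => key i)
  exact_mod_cast this

def gfun (V : ℤ → ℝ) (s : ℝ) : ℝ :=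
  V ⌊s⌋ + (s - ⌊s⌋) * (V (⌊s⌋ + 1) - V ⌊s⌋)

def PLfun (q : ℕ) (V : ℤ → ℝ) (t : ℝ) : ℝ :=
  gfun V ((q:ℝ) * t + 1/2)

variable {V : ℤ → ℝ}

lemma gfun_intCast (n : ℤ) : gfun V (n:ℝ) = V n := by
  unfold gfun; rw [Int.floor_intCast]; ring

lemma gfun_strictMono (hV : ∀ n, V n < V (n + 1)) : StrictMono (gfun V) := by
  have hVm : StrictMono V := strictMono_int_of_lt_succ hV
  intro s s' hss
  have hn : ⌊s⌋ ≤ ⌊s'⌋ := Int.floor_le_floor hss.le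
  have h0 : ∀ u : ℝ, 0 ≤ u - ⌊u⌋ := fun u => by have := Int.floor_le u; linarith
  have h1 : ∀ u : ℝ, u - ⌊u⌋ < 1 := fun u => by have := Int.lt_floor_add_one u; linarith
  unfold gfun
  rcases eq_or_lt_of_le hn with he | hlt
  · rw [← he]
    have hd : 0 < V (⌊s⌋ + 1) - V ⌊s⌋ := by linarith [hV ⌊s⌋]
    nlinarith
  · have hd : 0 < V (⌊s⌋ + 1) - V ⌊s⌋ := by linarith [hV ⌊s⌋]
    have hd' : 0 < V (⌊s'⌋ + 1) - V ⌊s'⌋ := by linarith [hV ⌊s'⌋]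
    have e1 : V ⌊s⌋ + (s - ⌊s⌋) * (V (⌊s⌋ + 1) - V ⌊s⌋) < V (⌊s⌋ + 1) := by
      nlinarith [h1 s]
    have e2 : V (⌊s⌋ + 1) ≤ V ⌊s'⌋ := hVm.monotone (by omega)
    have e3 : V ⌊s'⌋ ≤ V ⌊s'⌋ + (s' - ⌊s'⌋) * (V (⌊s'⌋ + 1) - V ⌊s'⌋) := by
      nlinarith [h0 s']
    linarith

lemma gfun_surjective (hk : 1 ≤ k) (hV : ∀ n, V n < V (n + 1))
    (hper : ∀ n, V (n + q) = V n + k) (hq : 1 ≤ q) :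
    Function.Surjective (gfun V) := by
  have hVm : StrictMono V := strictMono_int_of_lt_succ hV
  have hiter : ∀ j : ℕ, V (1 + q * j) = V 1 + k * j := by
    intro j
    induction j with
    | zero => simp
    | succ j ih =>
      push_cast
      have e : (1 : ℤ) + (q:ℤ) * ((j:ℤ) + 1) = (1 + (q:ℤ) * (j:ℤ)) + (q:ℤ) := by ring
      rw [e, hper, ih]; push_cast; ring
  have hiter' : ∀ j : ℕ, V (1 - q * j) = V 1 - k * j := by
    intro j
    induction j with
    | zero => simp
    | succ j ih =>
      push_cast
      have e : (1 : ℤ) - (q:ℤ) * (j:ℤ) = (1 - (q:ℤ) * ((j:ℤ)+1)) + (q:ℤ) := by ring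
      rw [e, hper] at ih
      push_cast at ih ⊢
      linarith
  intro y
  obtain ⟨j₁, hj₁⟩ := exists_nat_gt (y - V 1)
  have hub : y < V (1 + q * j₁) := by
    have h1 : (1:ℝ) ≤ k := by exact_mod_cast hk
    have h2 := hiter j₁
    nlinarith [Nat.cast_nonneg (α := ℝ) j₁]
  obtain ⟨j₀, hj₀⟩ := exists_nat_ge (V 1 - y)
  have hlb : V (1 - q * j₀) ≤ y := by
    have h1 : (1:ℝ) ≤ k := by exact_mod_cast hk
    have h2 := hiter' j₀
    nlinarith [Nat.cast_nonneg (α := ℝ) j₀]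
  obtain ⟨n, hn, hmax⟩ := Int.exists_greatest_of_bdd
    (P := fun n => V n ≤ y)
    ⟨1 + q * j₁, fun z hz => by
      by_contra hc
      push_neg at hc
      have : V (1 + q * j₁) ≤ V z := hVm.monotone (by omega)
      linarith⟩
    ⟨1 - q * j₀, hlb⟩
  have hny : y < V (n + 1) := by
    by_contra hc
    push_neg at hc
    have := hmax (n + 1) hc
    omega
  have hd : 0 < V (n+1) - V n := by linarith [hV n]
  refine ⟨(n:ℝ) + (y - V n) / (V (n+1) - V n), ?_⟩
  have hθ0 : 0 ≤ (y - V n) / (V (n+1) - V n) := div_nonneg (by linarith) hd.le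
  have hθ1 : (y - V n) / (V (n+1) - V n) < 1 := (div_lt_one hd).2 (by linarith)
  have hfl : ⌊(n:ℝ) + (y - V n) / (V (n+1) - V n)⌋ = n := by
    rw [Int.floor_eq_iff]
    constructor
    · push_cast; linarith
    · push_cast; linarith
  unfold gfun
  rw [hfl]
  have : ((n:ℝ) + (y - V n) / (V (n+1) - V n) - n) = (y - V n) / (V (n+1) - V n) := by ring
  rw [this, div_mul_cancel₀ _ (by linarith : V (n+1) - V n ≠ 0)]
  ring

lemma PL_node (hq : 1 ≤ q) (n : ℤ) :
    PLfun q V ((2 * (n:ℝ) - 1) / (2 * q)) = V n := by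
  have hq0 : (q:ℝ) ≠ 0 := by positivity
  have hs : (q:ℝ) * ((2 * (n:ℝ) - 1) / (2 * q)) + 1/2 = (n:ℝ) := by
    field_simp; ring
  unfold PLfun
  rw [hs, gfun_intCast]

lemma PL_strictMono (hq : 1 ≤ q) (hV : ∀ n, V n < V (n + 1)) :
    StrictMono (PLfun q V) := by
  have hq0 : (0:ℝ) < q := by positivity
  intro t t' h
  exact gfun_strictMono hV (by nlinarith)

lemma PL_periodic (hq : 1 ≤ q) (hper : ∀ n, V (n + q) = V n + k) (t : ℝ) :
    PLfun q V (t + 1) = PLfun q V t + k := by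
  unfold PLfun
  have hs : (q:ℝ) * (t + 1) + 1/2 = ((q:ℝ) * t + 1/2) + ((q:ℤ):ℝ) := by
    push_cast; ring
  rw [hs]
  set s := (q:ℝ) * t + 1/2
  unfold gfun
  rw [Int.floor_add_intCast]
  have e1 : V (⌊s⌋ + q) = V ⌊s⌋ + k := hper _
  have e2 : V (⌊s⌋ + q + 1) = V (⌊s⌋ + 1) + k := by
    have := hper (⌊s⌋ + 1)
    rw [show ⌊s⌋ + 1 + (q:ℤ) = ⌊s⌋ + (q:ℤ) + 1 by ring] at this
    exact this
  rw [e1, e2]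
  push_cast
  ring

lemma PL_surjective (hq : 1 ≤ q) (hk : 1 ≤ k) (hV : ∀ n, V n < V (n + 1))
    (hper : ∀ n, V (n + q) = V n + k) :
    Function.Surjective (PLfun q V) := by
  intro y
  obtain ⟨s, hs⟩ := gfun_surjective hk hV hper hq y
  refine ⟨(s - 1/2) / q, ?_⟩
  unfold PLfun
  have hq0 : (q:ℝ) ≠ 0 := by positivity
  rw [show (q:ℝ) * ((s - 1/2)/q) + 1/2 = s by field_simp; ring]
  exact hs


variable {σ : Equiv.Perm (ZMod q)}

def xpt (q : ℕ) [NeZero q] (i : ZMod q) : ℝ := (2 * (rep q i : ℝ) - 1) / (2 * q)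

def mfun (q : ℕ) [NeZero q] (σ : Equiv.Perm (ZMod q)) (i : ZMod q) : ℕ :=
  (Finset.univ.filter fun i' : ZMod q =>
    rep q (σ (i' + 1)) < rep q (σ i') ∧ rep q i' < rep q i).card

def Vfun (q : ℕ) [NeZero q] (σ : Equiv.Perm (ZMod q)) (k : ℕ) (n : ℤ) : ℝ :=
  xpt q (σ ((n : ZMod q))) + (mfun q σ ((n : ZMod q)) : ℝ) + (k : ℝ) * (((n - 1) / (q:ℤ) : ℤ) : ℝ)

lemma xpt_mem (i : ZMod q) : xpt q i ∈ Set.Ioo (0:ℝ) 1 := by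
  have h1 : (1:ℝ) ≤ (rep q i : ℝ) := by exact_mod_cast rep_pos i
  have h2 : (rep q i : ℝ) ≤ q := by exact_mod_cast rep_le i
  have hq0 : (0:ℝ) < q := by
    have := NeZero.pos q; exact_mod_cast this
  unfold xpt
  constructor
  · apply div_pos (by linarith) (by linarith)
  · rw [div_lt_one (by linarith)]; linarith

lemma xpt_lt {i j : ZMod q} (h : rep q i < rep q j) : xpt q i < xpt q j := by
  have hq0 : (0:ℝ) < q := by have := NeZero.pos q; exact_mod_cast this
  have hc : (rep q i : ℝ) < rep q j := by exact_mod_cast h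
  unfold xpt
  apply div_lt_div_of_pos_right (by linarith) (by linarith)

lemma filter_eq_single (i : ZMod q) (D : ZMod q → Prop) [inst : ∀ a, Decidable (D a)] :
    (Finset.univ.filter fun i' : ZMod q => D i' ∧ i' = i).card
      = if D i then 1 else 0 := by
  by_cases hD : D i
  · rw [if_pos hD]
    have : (Finset.univ.filter fun i' : ZMod q => D i' ∧ i' = i) = {i} := by
      ext a
      simp only [Finset.mem_filter, Finset.mem_univ, true_and, Finset.mem_singleton]
      exact ⟨fun h => h.2, fun h => ⟨h ▸ hD, h⟩⟩
    rw [this, Finset.card_singleton]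
  · rw [if_neg hD]
    rw [Finset.card_eq_zero]
    apply Finset.filter_false_of_mem
    intro a _ h
    exact hD (h.2 ▸ h.1)

lemma mfun_succ (hq : 2 ≤ q) (i : ZMod q) (hi : i ≠ 0) :
    mfun q σ (i + 1)
      = mfun q σ i + (if rep q (σ (i+1)) < rep q (σ i) then 1 else 0) := by
  set D : ZMod q → Prop := fun i' => rep q (σ (i' + 1)) < rep q (σ i') with hD
  unfold mfun
  rw [rep_add_one hq i hi]
  have hcongr : (Finset.univ.filter fun i' : ZMod q => D i' ∧ rep q i' < rep q i + 1)
      = Finset.univ.filter fun i' : ZMod q =>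
          (D i' ∧ rep q i' < rep q i) ∨ (D i' ∧ i' = i) := by
    apply Finset.filter_congr
    intro x _
    constructor
    · rintro ⟨hd, hlt⟩
      rcases Nat.lt_succ_iff_lt_or_eq.1 hlt with h | h
      · exact Or.inl ⟨hd, h⟩
      · exact Or.inr ⟨hd, rep_inj h⟩
    · rintro (⟨hd, hlt⟩ | ⟨hd, he⟩)
      · exact ⟨hd, Nat.lt_succ_of_lt hlt⟩
      · exact ⟨hd, he ▸ Nat.lt_succ_self _⟩
  rw [hcongr, Finset.filter_or, Finset.card_union_of_disjoint]
  · congr 1; exact filter_eq_single i D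
  · rw [Finset.disjoint_filter]
    rintro x _ ⟨_, hlt⟩ ⟨_, he⟩
    exact absurd (he ▸ hlt) (lt_irrefl _)

lemma mfun_one (hq : 2 ≤ q) : mfun q σ 1 = 0 := by
  unfold mfun
  rw [rep_one hq, Finset.card_eq_zero]
  apply Finset.filter_false_of_mem
  intro a _ h
  exact absurd h.2 (by have := rep_pos (q := q) a; omega)

lemma mfun_zero_add (hq : 2 ≤ q) :
    mfun q σ 0 + (if rep q (σ (0+1)) < rep q (σ 0) then 1 else 0) = desNum q σ := by
  set D : ZMod q → Prop := fun i' => rep q (σ (i' + 1)) < rep q (σ i') with hD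
  unfold mfun desNum
  rw [rep_zero]
  have hcongr : (Finset.univ.filter fun i' : ZMod q => D i')
      = Finset.univ.filter fun i' : ZMod q =>
          (D i' ∧ rep q i' < q) ∨ (D i' ∧ i' = 0) := by
    apply Finset.filter_congr
    intro x _
    constructor
    · intro hd
      by_cases hx : x = 0
      · exact Or.inr ⟨hd, hx⟩
      · exact Or.inl ⟨hd, rep_lt_q x hx⟩
    · rintro (⟨hd, _⟩ | ⟨hd, _⟩) <;> exact hd
  rw [hcongr, Finset.filter_or, Finset.card_union_of_disjoint]
  · congr 1; exact (filter_eq_single 0 D).symm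
  · rw [Finset.disjoint_filter]
    rintro x _ ⟨_, hlt⟩ ⟨_, he⟩
    rw [he, rep_zero] at hlt
    exact absurd hlt (lt_irrefl _)

lemma sigma_succ_ne (hq : 2 ≤ q) (σ : Equiv.Perm (ZMod q)) (i : ZMod q) :
    σ (i + 1) ≠ σ i := by
  intro h
  have : i + 1 = i := σ.injective h
  exact one_ne_zero' hq (add_eq_left.mp this)

lemma vstep1 (hq : 2 ≤ q) (σ : Equiv.Perm (ZMod q)) (i : ZMod q) (hi : i ≠ 0) :
    xpt q (σ i) + (mfun q σ i : ℝ) < xpt q (σ (i+1)) + (mfun q σ (i+1) : ℝ) := by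
  rw [mfun_succ hq i hi]
  by_cases hd : rep q (σ (i+1)) < rep q (σ i)
  · rw [if_pos hd]
    have h1 := (xpt_mem (q := q) (σ i)).2
    have h2 := (xpt_mem (q := q) (σ (i+1))).1
    push_cast
    linarith
  · rw [if_neg hd]
    have hne : rep q (σ (i+1)) ≠ rep q (σ i) :=
      fun h => sigma_succ_ne hq σ i (rep_inj h)
    have : rep q (σ i) < rep q (σ (i+1)) := by omega
    have := xpt_lt (q := q) this
    push_cast
    linarith

lemma vstep2 (hq : 2 ≤ q) (σ : Equiv.Perm (ZMod q)) (hk : desNum q σ ≤ k) :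
    xpt q (σ 0) + (mfun q σ 0 : ℝ) < xpt q (σ 1) + (mfun q σ 1 : ℝ) + k := by
  have hz := mfun_zero_add (σ := σ) hq
  rw [mfun_one hq]
  by_cases hd : rep q (σ (0+1)) < rep q (σ 0)
  · rw [if_pos hd] at hz
    have hx : xpt q (σ (0+1)) < xpt q (σ 0) := xpt_lt hd
    rw [zero_add] at hx
    have h1 := (xpt_mem (q := q) (σ 0)).2
    have h2 := (xpt_mem (q := q) (σ 1)).1
    have hm : (mfun q σ 0 : ℝ) + 1 = desNum q σ := by exact_mod_cast hz
    have hkr : (desNum q σ : ℝ) ≤ k := by exact_mod_cast hk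
    push_cast
    linarith
  · rw [if_neg hd] at hz
    have hne : rep q (σ (0+1)) ≠ rep q (σ 0) :=
      fun h => sigma_succ_ne hq σ 0 (rep_inj h)
    have hgt : rep q (σ 0) < rep q (σ (0+1)) := by omega
    have hx : xpt q (σ 0) < xpt q (σ 1) := by
      have := xpt_lt (q := q) hgt
      rwa [zero_add] at this
    rw [add_zero] at hz
    have hm : (mfun q σ 0 : ℝ) = desNum q σ := by exact_mod_cast hz
    have hkr : (desNum q σ : ℝ) ≤ k := by exact_mod_cast hk
    push_cast
    linarith

lemma exists_decomp (n : ℤ) : ∃ a : ℤ, ∃ r : ℕ, 1 ≤ r ∧ r ≤ q ∧ n = q * a + r := by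
  have hq0 : (0:ℤ) < q := by exact_mod_cast NeZero.pos q
  have h0 : 0 ≤ (n-1) % q := Int.emod_nonneg _ (by omega)
  have hlt : (n-1) % q < q := Int.emod_lt_of_pos _ hq0
  have hdm := Int.mul_ediv_add_emod (n-1) q
  exact ⟨(n-1) / q, ((n-1) % q).toNat + 1, by omega, by omega, by omega⟩

lemma cast_decomp (a : ℤ) (r : ℕ) : (((q : ℤ) * a + r : ℤ) : ZMod q) = (r : ZMod q) := by
  push_cast
  simp [ZMod.natCast_self]

lemma Vfun_eval (σ : Equiv.Perm (ZMod q)) (a : ℤ) (r : ℕ) (h1 : 1 ≤ r) (h2 : r ≤ q) :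
    Vfun q σ k ((q : ℤ) * a + r)
      = xpt q (σ ((r : ZMod q))) + (mfun q σ ((r : ZMod q)) : ℝ) + (k:ℝ) * a := by
  unfold Vfun
  rw [cast_decomp]
  have hq0 : (q:ℤ) ≠ 0 := by have := NeZero.pos q; omega
  have he : ((q : ℤ) * a + r - 1) / q = a := by
    rw [show (q : ℤ) * a + r - 1 = ((r:ℤ) - 1) + (q:ℤ) * a by ring,
      Int.add_mul_ediv_left _ _ hq0,
      Int.ediv_eq_zero_of_lt (by omega) (by omega), zero_add]
  rw [he]

lemma Vfun_lt (hq : 2 ≤ q) (σ : Equiv.Perm (ZMod q)) (hk : desNum q σ ≤ k) (n : ℤ) :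
    Vfun q σ k n < Vfun q σ k (n + 1) := by
  obtain ⟨a, r, h1, h2, rfl⟩ := exists_decomp (q := q) n
  rcases eq_or_lt_of_le h2 with he | hlt
  · have e1 : ((r : ℕ) : ZMod q) = 0 := by rw [he]; exact ZMod.natCast_self q
    have e2 : (q:ℤ) * a + r + 1 = (q:ℤ) * (a + 1) + ((1:ℕ):ℤ) := by
      rw [he]; push_cast; ring
    rw [e2, Vfun_eval σ (a+1) 1 le_rfl (by omega), Vfun_eval σ a r h1 h2, e1]
    have := vstep2 (k := k) hq σ hk
    push_cast
    push_cast at this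
    linarith
  · have e2 : (q:ℤ) * a + r + 1 = (q:ℤ) * a + ((r + 1 : ℕ) : ℤ) := by push_cast; ring
    rw [e2, Vfun_eval σ a r h1 h2, Vfun_eval σ a (r+1) (by omega) (by omega)]
    have hrz : ((r : ZMod q)) ≠ 0 := by
      intro h
      have := ZMod.val_cast_of_lt (show r < q by omega)
      rw [h, ZMod.val_zero] at this
      omega
    have hcast : ((r + 1 : ℕ) : ZMod q) = (r : ZMod q) + 1 := by push_cast; ring
    rw [hcast]
    have := vstep1 hq σ (r : ZMod q) hrz
    linarith

lemma Vfun_per (σ : Equiv.Perm (ZMod q)) (n : ℤ) :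
    Vfun q σ k (n + q) = Vfun q σ k n + k := by
  obtain ⟨a, r, h1, h2, rfl⟩ := exists_decomp (q := q) n
  have e : (q:ℤ) * a + r + q = (q:ℤ) * (a + 1) + r := by ring
  rw [e, Vfun_eval σ (a+1) r h1 h2, Vfun_eval σ a r h1 h2]
  push_cast
  ring

lemma backward (hq : 2 ≤ q) (σ : Equiv.Perm (ZMod q)) (hk : desNum q σ ≤ k) :
    ∃ F : ℝ → ℝ, ∃ x : ZMod q → ℝ, IsDegreeLift k F ∧ IsRealization q σ F x := by
  have hq1 : 1 ≤ q := by omega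
  have hk1 : 1 ≤ k := le_trans (one_le_desNum hq σ) hk
  have hV : ∀ n : ℤ, Vfun q σ k n < Vfun q σ k (n + 1) := Vfun_lt hq σ hk
  have hper : ∀ n : ℤ, Vfun q σ k (n + q) = Vfun q σ k n + k := Vfun_per σ
  have hmono : StrictMono (PLfun q (Vfun q σ k)) := PL_strictMono hq1 hV
  have hsurj : Function.Surjective (PLfun q (Vfun q σ k)) :=
    PL_surjective hq1 hk1 hV hper
  have hcont : Continuous (PLfun q (Vfun q σ k)) := by
    have := (StrictMono.orderIsoOfSurjective _ hmono hsurj).continuous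
    rwa [StrictMono.coe_orderIsoOfSurjective] at this
  refine ⟨PLfun q (Vfun q σ k), fun i => xpt q i,
    ⟨hcont, hmono, PL_periodic hq1 hper⟩, fun i => xpt_mem i,
    fun i j h => xpt_lt h, fun i => ⟨mfun q σ i, ?_⟩⟩
  show PLfun q (Vfun q σ k) (xpt q i) = xpt q (σ i) + ((mfun q σ i : ℤ) : ℝ)
  have hx : xpt q i = (2 * ((rep q i : ℤ) : ℝ) - 1) / (2 * q) := by
    unfold xpt; push_cast; ring
  rw [hx, PL_node hq1]
  have e : ((rep q i : ℕ) : ℤ) = (q : ℤ) * 0 + (rep q i : ℕ) := by ring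
  rw [e, Vfun_eval σ 0 (rep q i) (rep_pos i) (rep_le i), cast_rep]
  push_cast
  ring

end CircleAux

/-- A `q`-cycle `σ` has a realization by a covering map of degree `k` iff
`k ≥ des σ`; in particular the minimal degree of a covering map of the circle
admitting a period `q` orbit realizing `σ` is `des σ`. -/
theorem realization_iff_degree_ge_descent (q k : ℕ) [NeZero q] (hq : 2 ≤ q)
    (σ : Equiv.Perm (ZMod q)) (hσ : IsQCycle q σ) :
    ((∃ F : ℝ → ℝ, ∃ x : ZMod q → ℝ, IsDegreeLift k F ∧ IsRealization q σ F x) ↔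
      desNum q σ ≤ k) ∧
    sInf {k' : ℕ | ∃ F : ℝ → ℝ, ∃ x : ZMod q → ℝ,
      IsDegreeLift k' F ∧ IsRealization q σ F x} = desNum q σ := by
  constructor
  · constructor
    · rintro ⟨F, x, hF, hx⟩
      exact CircleAux.forward hq σ F x hF hx
    · intro hk
      exact CircleAux.backward hq σ hk
  · apply le_antisymm
    · exact Nat.sInf_le (CircleAux.backward hq σ le_rfl)
    · apply le_csInf ⟨desNum q σ, CircleAux.backward hq σ le_rfl⟩
      rintro k' ⟨F, x, hF, hx⟩
      exact CircleAux.forward hq σ F x hF hx
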